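/- (Proposition 1) Let q(x) = CN(x; m(v), Φ(v)) be the posterior density at v, let i be an index, t > 0, and let w = v^{(i,t)}. If the evidence lower bound does not decrease, i.e. ∫_{ℂ^N} q(x) ln( p(y|x) p(x|w) / q(x) ) dx ≥ ∫_{ℂ^N} q(x) ln( p(y|x) p(x|v) / q(x) ) dx, then the evidence does not decrease: ∫_{ℂ^N} p(y|x) p(x|w) dx ≥ ∫_{ℂ^N} p(y|x) p(x|v) dx. -/

import Mathlib

open Matrix MeasureTheory

/-- `Dmat v` is the diagonal matrix with diagonal entries `v 1, …, v N`. -/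
noncomputable def Dmat {N : ℕ} (v : Fin N → ℝ) : Matrix (Fin N) (Fin N) ℂ :=
  Matrix.diagonal fun i => (v i : ℂ)

/-- `Phi A σ v = (σ⁻² AᴴA + D(v)⁻¹)⁻¹`. -/
noncomputable def Phi {M N : ℕ} (A : Matrix (Fin M) (Fin N) ℂ) (σ : ℝ) (v : Fin N → ℝ) :
    Matrix (Fin N) (Fin N) ℂ :=
  (((σ : ℂ) ^ 2)⁻¹ • (Aᴴ * A) + (Dmat v)⁻¹)⁻¹

/-- `mvec A σ y v = σ⁻² Φ(v) Aᴴ y`. -/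
noncomputable def mvec {M N : ℕ} (A : Matrix (Fin M) (Fin N) ℂ) (σ : ℝ) (y : Fin M → ℂ)
    (v : Fin N → ℝ) : Fin N → ℂ :=
  ((σ : ℂ) ^ 2)⁻¹ • (Phi A σ v *ᵥ (Aᴴ *ᵥ y))

/-- Circularly symmetric complex Gaussian density
`CN(x; μ, S) = (π^N det S)⁻¹ exp(-(x-μ)ᴴ S⁻¹ (x-μ))` (real-valued, `det S` and the
quadratic form being real for Hermitian positive definite `S`). -/
noncomputable def gaussDensity {N : ℕ} (μ : Fin N → ℂ) (S : Matrix (Fin N) (Fin N) ℂ)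
    (x : Fin N → ℂ) : ℝ :=
  (Real.pi ^ N * S.det.re)⁻¹ * Real.exp (-(star (x - μ) ⬝ᵥ (S⁻¹ *ᵥ (x - μ))).re)

/-- Likelihood `p(y|x) = (π σ²)^{-M} exp(-σ⁻² ‖y - A x‖²)`. -/
noncomputable def likelihood {M N : ℕ} (A : Matrix (Fin M) (Fin N) ℂ) (σ : ℝ) (y : Fin M → ℂ)
    (x : Fin N → ℂ) : ℝ :=
  ((Real.pi * σ ^ 2) ^ M)⁻¹ * Real.exp (-(σ ^ 2)⁻¹ * ∑ j, Complex.normSq ((y - A *ᵥ x) j))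

open Complex ComplexOrder

set_option linter.unusedVariables false

noncomputable def Bmat {M N : ℕ} (A : Matrix (Fin M) (Fin N) ℂ) (σ : ℝ) (v : Fin N → ℝ) :
    Matrix (Fin N) (Fin N) ℂ :=
  ((σ : ℂ) ^ 2)⁻¹ • (Aᴴ * A) + (Dmat v)⁻¹

lemma Dmat_inv {N : ℕ} (v : Fin N → ℝ) (hv : ∀ i, 0 < v i) :
    (Dmat v)⁻¹ = Matrix.diagonal fun j => ((v j : ℂ))⁻¹ := by
  apply Matrix.inv_eq_right_inv
  rw [Dmat, Matrix.diagonal_mul_diagonal]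
  have : ∀ j, (v j : ℂ) ≠ 0 := fun j => by exact_mod_cast (hv j).ne'
  simp [mul_inv_cancel₀, this]

lemma Bmat_posdef {M N : ℕ} (A : Matrix (Fin M) (Fin N) ℂ) (σ : ℝ) (v : Fin N → ℝ)
    (hσ : 0 < σ) (hv : ∀ i, 0 < v i) : (Bmat A σ v).PosDef := by
  have h1 : (((σ : ℂ) ^ 2)⁻¹ • (Aᴴ * A)).PosSemidef := by
    constructor
    · unfold Matrix.IsHermitian
      rw [Matrix.conjTranspose_smul, Matrix.conjTranspose_mul, Matrix.conjTranspose_conjTranspose]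
      congr 1
      simp [← Complex.ofReal_pow]
    · intro x
      refine ((Matrix.posSemidef_conjTranspose_mul_self A).smul ?_).2 x
      rw [← Complex.ofReal_pow, ← Complex.ofReal_inv]
      exact_mod_cast le_of_lt (by positivity : (0:ℝ) < (σ ^ 2)⁻¹)
  have h2 : ((Dmat v)⁻¹).PosDef := by
    rw [Dmat_inv v hv]
    refine Matrix.PosDef.diagonal fun j => ?_
    rw [← Complex.ofReal_inv]
    exact_mod_cast inv_pos.mpr (hv j)
  exact Matrix.PosDef.posSemidef_add h1 h2

lemma Bmat_det_isUnit {M N : ℕ} (A : Matrix (Fin M) (Fin N) ℂ) (σ : ℝ) (v : Fin N → ℝ)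
    (hσ : 0 < σ) (hv : ∀ i, 0 < v i) : IsUnit (Bmat A σ v).det :=
  ((Bmat_posdef A σ v hσ hv).det_pos.ne').isUnit

lemma Phi_inv {M N : ℕ} (A : Matrix (Fin M) (Fin N) ℂ) (σ : ℝ) (v : Fin N → ℝ)
    (hσ : 0 < σ) (hv : ∀ i, 0 < v i) : (Phi A σ v)⁻¹ = Bmat A σ v :=
  Matrix.nonsing_inv_nonsing_inv _ (Bmat_det_isUnit A σ v hσ hv)

lemma Phi_det_re_pos {M N : ℕ} (A : Matrix (Fin M) (Fin N) ℂ) (σ : ℝ) (v : Fin N → ℝ)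
    (hσ : 0 < σ) (hv : ∀ i, 0 < v i) : 0 < (Phi A σ v).det.re := by
  have : (Phi A σ v).PosDef := (Bmat_posdef A σ v hσ hv).inv
  have := this.det_pos
  rw [Complex.lt_def] at this
  exact this.1

lemma Bmat_mulVec_mvec {M N : ℕ} (A : Matrix (Fin M) (Fin N) ℂ) (σ : ℝ) (y : Fin M → ℂ)
    (v : Fin N → ℝ) (hσ : 0 < σ) (hv : ∀ i, 0 < v i) :
    Bmat A σ v *ᵥ mvec A σ y v = ((σ : ℂ) ^ 2)⁻¹ • (Aᴴ *ᵥ y) := by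
  rw [mvec, Matrix.mulVec_smul, Phi, Matrix.mulVec_mulVec, ← Bmat,
    Matrix.mul_nonsing_inv _ (Bmat_det_isUnit A σ v hσ hv), Matrix.one_mulVec]

lemma dot_star_self {k : ℕ} (u : Fin k → ℂ) :
    star u ⬝ᵥ u = ((∑ j, Complex.normSq (u j) : ℝ) : ℂ) := by
  rw [dotProduct, Complex.ofReal_sum]
  congr 1; funext j
  simp only [Pi.star_apply, Complex.star_def]
  rw [mul_comm, Complex.mul_conj]

lemma diag_quad {k : ℕ} (x : Fin k → ℂ) (v : Fin k → ℝ) (hv : ∀ i, 0 < v i) :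
    star x ⬝ᵥ ((Dmat v)⁻¹ *ᵥ x) = ((∑ j, Complex.normSq (x j) * (v j)⁻¹ : ℝ) : ℂ) := by
  rw [Dmat_inv v hv, dotProduct, Complex.ofReal_sum]
  congr 1; funext j
  simp only [Pi.star_apply, Matrix.mulVec_diagonal, Complex.star_def]
  push_cast
  rw [← Complex.mul_conj]
  ring

lemma keyQuad {M N : ℕ} (A : Matrix (Fin M) (Fin N) ℂ) (σ : ℝ) (y : Fin M → ℂ)
    (v : Fin N → ℝ) (hσ : 0 < σ) (hv : ∀ i, 0 < v i) (x : Fin N → ℂ) :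
    ((σ : ℂ) ^ 2)⁻¹ * (star (y - A *ᵥ x) ⬝ᵥ (y - A *ᵥ x)) + star x ⬝ᵥ ((Dmat v)⁻¹ *ᵥ x)
      = star (x - mvec A σ y v) ⬝ᵥ (Bmat A σ v *ᵥ (x - mvec A σ y v))
        + (((σ : ℂ) ^ 2)⁻¹ * (star y ⬝ᵥ y)
            - star (mvec A σ y v) ⬝ᵥ (Bmat A σ v *ᵥ mvec A σ y v)) := by
  set m := mvec A σ y v with hm
  set B := Bmat A σ v with hB
  set c : ℂ := ((σ : ℂ) ^ 2)⁻¹ with hc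
  have hstarc : star c = c := by
    rw [hc]; simp [← Complex.ofReal_pow]
  have hBm : B *ᵥ m = c • (Aᴴ *ᵥ y) := Bmat_mulVec_mvec A σ y v hσ hv
  -- ⟪m, B x⟫ = c * ⟪y, A x⟫
  have h1 : ∀ z : Fin N → ℂ, star m ⬝ᵥ (B *ᵥ z) = c * (star y ⬝ᵥ (A *ᵥ z)) := by
    intro z
    have : star m ⬝ᵥ (B *ᵥ z) = star (B *ᵥ m) ⬝ᵥ z := by
      rw [Matrix.dotProduct_mulVec, Matrix.star_mulVec,
        (Bmat_posdef A σ v hσ hv).isHermitian.eq]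
    rw [this, hBm, star_smul, hstarc, Matrix.star_mulVec, Matrix.conjTranspose_conjTranspose,
      smul_dotProduct, smul_eq_mul, ← Matrix.dotProduct_mulVec]
  -- ⟪z, B m⟫ = c * ⟪A z, y⟫
  have h2 : ∀ z : Fin N → ℂ, star z ⬝ᵥ (B *ᵥ m) = c * (star (A *ᵥ z) ⬝ᵥ y) := by
    intro z
    rw [hBm, dotProduct_smul, smul_eq_mul, Matrix.dotProduct_mulVec,
      ← Matrix.star_mulVec]
  -- ⟪x, B x⟫ = c * ⟪A x, A x⟫ + ⟪x, D⁻¹ x⟫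
  have h3 : star x ⬝ᵥ (B *ᵥ x)
      = c * (star (A *ᵥ x) ⬝ᵥ (A *ᵥ x)) + star x ⬝ᵥ ((Dmat v)⁻¹ *ᵥ x) := by
    rw [hB, Bmat, Matrix.add_mulVec, dotProduct_add, Matrix.smul_mulVec,
      dotProduct_smul, smul_eq_mul, ← Matrix.mulVec_mulVec,
      Matrix.dotProduct_mulVec (star x) Aᴴ, ← Matrix.star_mulVec]
  have expand : star (x - m) ⬝ᵥ (B *ᵥ (x - m))
      = star x ⬝ᵥ (B *ᵥ x) - star x ⬝ᵥ (B *ᵥ m) - star m ⬝ᵥ (B *ᵥ x)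
        + star m ⬝ᵥ (B *ᵥ m) := by
    rw [Matrix.mulVec_sub, star_sub, sub_dotProduct, dotProduct_sub, dotProduct_sub]
    ring
  have expandL : star (y - A *ᵥ x) ⬝ᵥ (y - A *ᵥ x)
      = star y ⬝ᵥ y - star y ⬝ᵥ (A *ᵥ x) - star (A *ᵥ x) ⬝ᵥ y
        + star (A *ᵥ x) ⬝ᵥ (A *ᵥ x) := by
    rw [star_sub, sub_dotProduct, dotProduct_sub, dotProduct_sub]
    ring
  rw [expand, expandL, h3, h1 x, h2 x, h1 m]
  ring

noncomputable def Qf {M N : ℕ} (A : Matrix (Fin M) (Fin N) ℂ) (σ : ℝ) (y : Fin M → ℂ)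
    (v : Fin N → ℝ) (x : Fin N → ℂ) : ℝ :=
  (star (x - mvec A σ y v) ⬝ᵥ (Bmat A σ v *ᵥ (x - mvec A σ y v))).re

lemma prior_eq {N : ℕ} (v : Fin N → ℝ) (hv : ∀ i, 0 < v i) (x : Fin N → ℂ) :
    gaussDensity 0 (Dmat v) x
      = (Real.pi ^ N * ∏ j, v j)⁻¹ * Real.exp (-(∑ j, Complex.normSq (x j) * (v j)⁻¹)) := by
  rw [gaussDensity, sub_zero]
  have hdet : (Dmat v).det.re = ∏ j, v j := by
    rw [Dmat, Matrix.det_diagonal]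
    rw [show (∏ i, ((v i : ℂ))) = (((∏ i, v i : ℝ)) : ℂ) by push_cast; ring]
    exact Complex.ofReal_re _
  rw [hdet, diag_quad x v hv, Complex.ofReal_re]

lemma keyQuadRe {M N : ℕ} (A : Matrix (Fin M) (Fin N) ℂ) (σ : ℝ) (y : Fin M → ℂ)
    (v : Fin N → ℝ) (hσ : 0 < σ) (hv : ∀ i, 0 < v i) (x : Fin N → ℂ) :
    (σ ^ 2)⁻¹ * (∑ k, Complex.normSq ((y - A *ᵥ x) k)) + ∑ j, Complex.normSq (x j) * (v j)⁻¹
      = Qf A σ y v x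
        + ((σ ^ 2)⁻¹ * (∑ k, Complex.normSq (y k))
            - (star (mvec A σ y v) ⬝ᵥ (Bmat A σ v *ᵥ mvec A σ y v)).re) := by
  have h := congrArg Complex.re (keyQuad A σ y v hσ hv x)
  have hc : ((σ : ℂ) ^ 2)⁻¹ = (((σ ^ 2)⁻¹ : ℝ) : ℂ) := by push_cast; ring
  rw [hc, dot_star_self (y - A *ᵥ x), dot_star_self y, diag_quad x v hv,
    ← Complex.ofReal_mul, ← Complex.ofReal_mul] at h
  simp only [Complex.add_re, Complex.sub_re, Complex.ofReal_re] at h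
  rw [Qf]
  exact h

lemma f_eq {M N : ℕ} (A : Matrix (Fin M) (Fin N) ℂ) (σ : ℝ) (y : Fin M → ℂ)
    (v : Fin N → ℝ) (hσ : 0 < σ) (hv : ∀ i, 0 < v i) (x : Fin N → ℂ) :
    likelihood A σ y x * gaussDensity 0 (Dmat v) x
      = (((Real.pi * σ ^ 2) ^ M)⁻¹ * (Real.pi ^ N * ∏ j, v j)⁻¹
          * Real.exp (-((σ ^ 2)⁻¹ * (∑ k, Complex.normSq (y k))
              - (star (mvec A σ y v) ⬝ᵥ (Bmat A σ v *ᵥ mvec A σ y v)).re)))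
        * Real.exp (-Qf A σ y v x) := by
  have hq := keyQuadRe A σ y v hσ hv x
  have hexp : (-(σ ^ 2)⁻¹ * ∑ j, Complex.normSq ((y - A *ᵥ x) j))
      + (-(∑ j, Complex.normSq (x j) * (v j)⁻¹))
      = (-((σ ^ 2)⁻¹ * (∑ k, Complex.normSq (y k))
          - (star (mvec A σ y v) ⬝ᵥ (Bmat A σ v *ᵥ mvec A σ y v)).re))
        + (-Qf A σ y v x) := by linarith
  rw [likelihood, prior_eq v hv x]
  calc ((Real.pi * σ ^ 2) ^ M)⁻¹ * Real.exp (-(σ ^ 2)⁻¹ * ∑ j, Complex.normSq ((y - A *ᵥ x) j))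
        * ((Real.pi ^ N * ∏ j, v j)⁻¹ * Real.exp (-(∑ j, Complex.normSq (x j) * (v j)⁻¹)))
      = ((Real.pi * σ ^ 2) ^ M)⁻¹ * (Real.pi ^ N * ∏ j, v j)⁻¹
          * Real.exp ((-(σ ^ 2)⁻¹ * ∑ j, Complex.normSq ((y - A *ᵥ x) j))
              + (-(∑ j, Complex.normSq (x j) * (v j)⁻¹))) := by
        rw [Real.exp_add]; ring
    _ = _ := by rw [hexp, Real.exp_add]; ring

lemma int_c1 {a : ℝ} (ha : 0 < a) :
    Integrable (fun z : ℂ => Real.exp (-a * Complex.normSq z)) := by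
  rw [← MeasurePreserving.integrable_comp_emb
    (Complex.volume_preserving_equiv_real_prod.symm Complex.measurableEquivRealProd)
    (MeasurableEquiv.measurableEmbedding _)]
  have : ((fun z : ℂ => Real.exp (-a * Complex.normSq z)) ∘ Complex.measurableEquivRealProd.symm)
      = fun p : ℝ × ℝ => Real.exp (-a * p.1 ^ 2) * Real.exp (-a * p.2 ^ 2) := by
    funext p
    simp [Function.comp, Complex.measurableEquivRealProd_symm_apply, Complex.normSq_mk,
      ← Real.exp_add]
    ring_nf
  rw [this]
  exact (integrable_exp_neg_mul_sq ha).mul_prod (integrable_exp_neg_mul_sq ha)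

lemma int_c2 {a : ℝ} (ha : 0 < a) :
    Integrable (fun z : ℂ => Complex.normSq z * Real.exp (-a * Complex.normSq z)) := by
  have h2 : (0:ℝ) < a / 2 := by positivity
  refine Integrable.mono' ((int_c1 h2).const_mul (2 / a)) ?_ (ae_of_all _ fun z => ?_)
  · exact (Complex.continuous_normSq.mul (Real.continuous_exp.comp
      ((continuous_const.mul Complex.continuous_normSq)))).aestronglyMeasurable
  · set s := Complex.normSq z with hs
    have hs0 : 0 ≤ s := Complex.normSq_nonneg z
    have h1 : a / 2 * s + 1 ≤ Real.exp (a / 2 * s) := Real.add_one_le_exp _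
    have h3 : Real.exp (-(a / 2) * s) = Real.exp (a / 2 * s) * Real.exp (-a * s) := by
      rw [← Real.exp_add]; ring_nf
    have he : (0:ℝ) < Real.exp (-a * s) := Real.exp_pos _
    rw [Real.norm_eq_abs, _root_.abs_of_nonneg (mul_nonneg hs0 (Real.exp_pos _).le)]
    rw [show (2 / a) * Real.exp (-(a/2) * s) = (2/a) * (Real.exp (a/2*s) * Real.exp (-a*s)) by
      rw [h3]]
    have hsle : s ≤ (2 / a) * Real.exp (a / 2 * s) := by
      rw [div_mul_eq_mul_div, le_div_iff₀ ha]
      nlinarith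
    calc s * Real.exp (-a * s) ≤ ((2 / a) * Real.exp (a / 2 * s)) * Real.exp (-a * s) :=
          mul_le_mul_of_nonneg_right hsle he.le
      _ = (2/a) * (Real.exp (a/2*s) * Real.exp (-a*s)) := by ring

lemma int_prior {N : ℕ} (v : Fin N → ℝ) (hv : ∀ i, 0 < v i) :
    Integrable (fun x : Fin N → ℂ => Real.exp (-(∑ j, Complex.normSq (x j) * (v j)⁻¹))) := by
  have heq : (fun x : Fin N → ℂ => Real.exp (-(∑ j, Complex.normSq (x j) * (v j)⁻¹)))
      = fun x => ∏ j, Real.exp (-(v j)⁻¹ * Complex.normSq (x j)) := by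
    funext x
    rw [← Real.exp_sum]
    congr 1
    rw [← Finset.sum_neg_distrib]
    exact Finset.sum_congr rfl fun j _ => by ring
  rw [heq]
  exact Integrable.fintype_prod (ι := Fin N) (E := ℂ)
    (f := fun j (z : ℂ) => Real.exp (-(v j)⁻¹ * Complex.normSq z))
    fun j => int_c1 (inv_pos.mpr (hv j))

lemma int_prior_mul {N : ℕ} (v : Fin N → ℝ) (hv : ∀ i, 0 < v i) (i : Fin N) :
    Integrable (fun x : Fin N → ℂ =>
      Complex.normSq (x i) * Real.exp (-(∑ j, Complex.normSq (x j) * (v j)⁻¹))) := by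
  have heq : (fun x : Fin N → ℂ =>
        Complex.normSq (x i) * Real.exp (-(∑ j, Complex.normSq (x j) * (v j)⁻¹)))
      = fun x => ∏ j, ((if j = i then Complex.normSq (x j) else 1)
          * Real.exp (-(v j)⁻¹ * Complex.normSq (x j))) := by
    funext x
    rw [Finset.prod_mul_distrib, Finset.prod_ite_eq' Finset.univ i fun j => Complex.normSq (x j)]
    simp only [Finset.mem_univ, if_true]
    congr 1
    rw [← Real.exp_sum]
    congr 1
    rw [← Finset.sum_neg_distrib]
    exact Finset.sum_congr rfl fun j _ => by ring
  rw [heq]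
  refine Integrable.fintype_prod (ι := Fin N) (E := ℂ)
    (f := fun j (z : ℂ) => (if j = i then Complex.normSq z else 1)
      * Real.exp (-(v j)⁻¹ * Complex.normSq z)) fun j => ?_
  by_cases hj : j = i
  · subst hj
    simpa using int_c2 (inv_pos.mpr (hv j))
  · simpa [hj] using int_c1 (inv_pos.mpr (hv j))

lemma cont_Qf {M N : ℕ} (A : Matrix (Fin M) (Fin N) ℂ) (σ : ℝ) (y : Fin M → ℂ)
    (v : Fin N → ℝ) : Continuous (Qf A σ y v) := by
  unfold Qf
  simp only [dotProduct, mulVec]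
  fun_prop

lemma cont_f {M N : ℕ} (A : Matrix (Fin M) (Fin N) ℂ) (σ : ℝ) (y : Fin M → ℂ)
    (v : Fin N → ℝ) (hσ : 0 < σ) (hv : ∀ i, 0 < v i) :
    Continuous (fun x : Fin N → ℂ => likelihood A σ y x * gaussDensity 0 (Dmat v) x) := by
  have : (fun x : Fin N → ℂ => likelihood A σ y x * gaussDensity 0 (Dmat v) x)
      = fun x => (((Real.pi * σ ^ 2) ^ M)⁻¹ * (Real.pi ^ N * ∏ j, v j)⁻¹
          * Real.exp (-((σ ^ 2)⁻¹ * (∑ k, Complex.normSq (y k))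
              - (star (mvec A σ y v) ⬝ᵥ (Bmat A σ v *ᵥ mvec A σ y v)).re)))
        * Real.exp (-Qf A σ y v x) := funext fun x => f_eq A σ y v hσ hv x
  rw [this]
  exact continuous_const.mul (Real.continuous_exp.comp (cont_Qf A σ y v).neg)

lemma f_nonneg {M N : ℕ} (A : Matrix (Fin M) (Fin N) ℂ) (σ : ℝ) (y : Fin M → ℂ)
    (v : Fin N → ℝ) (hσ : 0 < σ) (hv : ∀ i, 0 < v i) (x : Fin N → ℂ) :
    0 ≤ likelihood A σ y x * gaussDensity 0 (Dmat v) x := by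
  rw [likelihood, prior_eq v hv x]
  have h1 : 0 < ∏ j, v j := Finset.prod_pos fun j _ => hv j
  have := Real.pi_pos
  positivity

lemma f_le {M N : ℕ} (A : Matrix (Fin M) (Fin N) ℂ) (σ : ℝ) (y : Fin M → ℂ)
    (v : Fin N → ℝ) (hσ : 0 < σ) (hv : ∀ i, 0 < v i) (x : Fin N → ℂ) :
    likelihood A σ y x * gaussDensity 0 (Dmat v) x
      ≤ (((Real.pi * σ ^ 2) ^ M)⁻¹ * (Real.pi ^ N * ∏ j, v j)⁻¹)
          * Real.exp (-(∑ j, Complex.normSq (x j) * (v j)⁻¹)) := by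
  rw [likelihood, prior_eq v hv x]
  have h1 : 0 < ∏ j, v j := Finset.prod_pos fun j _ => hv j
  have hpi := Real.pi_pos
  have hexp1 : Real.exp (-(σ ^ 2)⁻¹ * ∑ j, Complex.normSq ((y - A *ᵥ x) j)) ≤ 1 := by
    rw [Real.exp_le_one_iff]
    have : 0 ≤ ∑ j, Complex.normSq ((y - A *ᵥ x) j) :=
      Finset.sum_nonneg fun j _ => Complex.normSq_nonneg _
    have h2 : 0 < (σ ^ 2)⁻¹ := by positivity
    nlinarith
  have hc1 : (0:ℝ) ≤ ((Real.pi * σ ^ 2) ^ M)⁻¹ := by positivity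
  have hc2 : (0:ℝ) ≤ (Real.pi ^ N * ∏ j, v j)⁻¹ := by positivity
  have he2 : (0:ℝ) < Real.exp (-(∑ j, Complex.normSq (x j) * (v j)⁻¹)) := Real.exp_pos _
  calc ((Real.pi * σ ^ 2) ^ M)⁻¹ * Real.exp (-(σ ^ 2)⁻¹ * ∑ j, Complex.normSq ((y - A *ᵥ x) j))
        * ((Real.pi ^ N * ∏ j, v j)⁻¹ * Real.exp (-(∑ j, Complex.normSq (x j) * (v j)⁻¹)))
      = (((Real.pi * σ ^ 2) ^ M)⁻¹ * (Real.pi ^ N * ∏ j, v j)⁻¹)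
          * (Real.exp (-(σ ^ 2)⁻¹ * ∑ j, Complex.normSq ((y - A *ᵥ x) j))
              * Real.exp (-(∑ j, Complex.normSq (x j) * (v j)⁻¹))) := by ring
    _ ≤ (((Real.pi * σ ^ 2) ^ M)⁻¹ * (Real.pi ^ N * ∏ j, v j)⁻¹)
          * (1 * Real.exp (-(∑ j, Complex.normSq (x j) * (v j)⁻¹))) := by
        refine mul_le_mul_of_nonneg_left ?_ (mul_nonneg hc1 hc2)
        exact mul_le_mul_of_nonneg_right hexp1 he2.le
    _ = (((Real.pi * σ ^ 2) ^ M)⁻¹ * (Real.pi ^ N * ∏ j, v j)⁻¹)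
          * Real.exp (-(∑ j, Complex.normSq (x j) * (v j)⁻¹)) := by ring

lemma int_f {M N : ℕ} (A : Matrix (Fin M) (Fin N) ℂ) (σ : ℝ) (y : Fin M → ℂ)
    (v : Fin N → ℝ) (hσ : 0 < σ) (hv : ∀ i, 0 < v i) :
    Integrable (fun x : Fin N → ℂ => likelihood A σ y x * gaussDensity 0 (Dmat v) x) := by
  refine Integrable.mono' ((int_prior v hv).const_mul
      (((Real.pi * σ ^ 2) ^ M)⁻¹ * (Real.pi ^ N * ∏ j, v j)⁻¹))
    (cont_f A σ y v hσ hv).aestronglyMeasurable (ae_of_all _ fun x => ?_)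
  rw [Real.norm_eq_abs, _root_.abs_of_nonneg (f_nonneg A σ y v hσ hv x)]
  exact f_le A σ y v hσ hv x

lemma int_f_mul {M N : ℕ} (A : Matrix (Fin M) (Fin N) ℂ) (σ : ℝ) (y : Fin M → ℂ)
    (v : Fin N → ℝ) (hσ : 0 < σ) (hv : ∀ i, 0 < v i) (i : Fin N) :
    Integrable (fun x : Fin N → ℂ =>
      (likelihood A σ y x * gaussDensity 0 (Dmat v) x) * Complex.normSq (x i)) := by
  refine Integrable.mono' (((int_prior_mul v hv i)).const_mul
      (((Real.pi * σ ^ 2) ^ M)⁻¹ * (Real.pi ^ N * ∏ j, v j)⁻¹))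
    ((cont_f A σ y v hσ hv).mul
      (Complex.continuous_normSq.comp (continuous_apply i))).aestronglyMeasurable
    (ae_of_all _ fun x => ?_)
  rw [Real.norm_eq_abs, _root_.abs_of_nonneg
    (mul_nonneg (f_nonneg A σ y v hσ hv x) (Complex.normSq_nonneg _))]
  have h1 := f_le A σ y v hσ hv x
  have h2 : 0 ≤ Complex.normSq (x i) := Complex.normSq_nonneg _
  calc likelihood A σ y x * gaussDensity 0 (Dmat v) x * Complex.normSq (x i)
      ≤ ((((Real.pi * σ ^ 2) ^ M)⁻¹ * (Real.pi ^ N * ∏ j, v j)⁻¹)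
          * Real.exp (-(∑ j, Complex.normSq (x j) * (v j)⁻¹))) * Complex.normSq (x i) :=
        mul_le_mul_of_nonneg_right h1 h2
    _ = (((Real.pi * σ ^ 2) ^ M)⁻¹ * (Real.pi ^ N * ∏ j, v j)⁻¹)
          * (Complex.normSq (x i) * Real.exp (-(∑ j, Complex.normSq (x j) * (v j)⁻¹))) := by ring

lemma prior_update {N : ℕ} (v : Fin N → ℝ) (hv : ∀ i, 0 < v i) (i : Fin N) (t : ℝ)
    (ht : 0 < t) (x : Fin N → ℂ) :
    gaussDensity 0 (Dmat (Function.update v i t)) x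
      = gaussDensity 0 (Dmat v) x
          * Real.exp (Real.log (v i / t) + ((v i)⁻¹ - t⁻¹) * Complex.normSq (x i)) := by
  have hw : ∀ j, 0 < Function.update v i t j := by
    intro j
    by_cases hj : j = i
    · subst hj; simpa using ht
    · simpa [Function.update_of_ne hj] using hv j
  rw [prior_eq _ hw x, prior_eq v hv x]
  have hprod : ∏ j, Function.update v i t j = t * ∏ j ∈ Finset.univ.erase i, v j := by
    rw [Finset.prod_update_of_mem (Finset.mem_univ i), Finset.sdiff_singleton_eq_erase]
  have hprodv : (∏ j, v j) = v i * ∏ j ∈ Finset.univ.erase i, v j :=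
    (Finset.mul_prod_erase _ _ (Finset.mem_univ i)).symm
  have hP : 0 < ∏ j ∈ Finset.univ.erase i, v j := Finset.prod_pos fun j _ => hv j
  have hsum : ∑ j, Complex.normSq (x j) * (Function.update v i t j)⁻¹
      = Complex.normSq (x i) * t⁻¹ - Complex.normSq (x i) * (v i)⁻¹
        + ∑ j, Complex.normSq (x j) * (v j)⁻¹ := by
    have h1 : ∀ j, Complex.normSq (x j) * (Function.update v i t j)⁻¹
        = Complex.normSq (x j) * (v j)⁻¹
          + (if j = i then Complex.normSq (x i) * t⁻¹ - Complex.normSq (x i) * (v i)⁻¹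
              else 0) := by
      intro j
      by_cases hj : j = i
      · subst hj
        rw [Function.update_self, if_pos rfl]
        ring
      · rw [Function.update_of_ne hj, if_neg hj, add_zero]
    rw [Finset.sum_congr rfl fun j _ => h1 j, Finset.sum_add_distrib,
      Finset.sum_ite_eq' Finset.univ i
        (fun _ => Complex.normSq (x i) * t⁻¹ - Complex.normSq (x i) * (v i)⁻¹)]
    simp only [Finset.mem_univ, if_true]
    ring
  rw [hprod, hprodv, hsum]
  rw [Real.exp_add, Real.exp_log (div_pos (hv i) ht)]
  rw [show -(Complex.normSq (x i) * t⁻¹ - Complex.normSq (x i) * (v i)⁻¹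
        + ∑ j, Complex.normSq (x j) * (v j)⁻¹)
      = (((v i)⁻¹ - t⁻¹) * Complex.normSq (x i))
        + (-(∑ j, Complex.normSq (x j) * (v j)⁻¹)) by ring, Real.exp_add]
  have hpi := Real.pi_pos
  have hvi := hv i
  field_simp

lemma div_helper1 (a b : ℝ) (ha : a ≠ 0) (hb : b ≠ 0) : a / (b * a) = b⁻¹ := by
  field_simp

lemma div_helper2 (a b E : ℝ) (ha : a ≠ 0) (hb : b ≠ 0) : a * E / (b * a) = b⁻¹ * E := by
  field_simp

/-- Proposition 1: with q = CN(·; m(v), Φ(v)) and w = v^{(i,t)} (t > 0),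
if the evidence lower bound does not decrease,
∫ q ln(p(y|·)p(·|w)/q) ≥ ∫ q ln(p(y|·)p(·|v)/q),
then the evidence does not decrease: ∫ p(y|·)p(·|w) ≥ ∫ p(y|·)p(·|v). -/
theorem stmt7 (M N : ℕ) (hM : 0 < M) (hN : 0 < N) (A : Matrix (Fin M) (Fin N) ℂ)
    (y : Fin M → ℂ) (σ : ℝ) (hσ : 0 < σ) (v : Fin N → ℝ) (hv : ∀ i, 0 < v i)
    (i : Fin N) (t : ℝ) (ht : 0 < t)
    (helbo : (∫ x : Fin N → ℂ,
          gaussDensity (mvec A σ y v) (Phi A σ v) x *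
            Real.log (likelihood A σ y x * gaussDensity 0 (Dmat (Function.update v i t)) x /
              gaussDensity (mvec A σ y v) (Phi A σ v) x))
        ≥ ∫ x : Fin N → ℂ,
            gaussDensity (mvec A σ y v) (Phi A σ v) x *
              Real.log (likelihood A σ y x * gaussDensity 0 (Dmat v) x /
                gaussDensity (mvec A σ y v) (Phi A σ v) x)) :
    (∫ x : Fin N → ℂ, likelihood A σ y x * gaussDensity 0 (Dmat (Function.update v i t)) x)
      ≥ ∫ x : Fin N → ℂ, likelihood A σ y x * gaussDensity 0 (Dmat v) x := by
  classical
  have hπ := Real.pi_pos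
  have hvt : 0 < v i / t := div_pos (hv i) ht
  have hw : ∀ j, 0 < Function.update v i t j := by
    intro j
    by_cases hj : j = i
    · subst hj; simpa using ht
    · simpa [Function.update_of_ne hj] using hv j
  set dPhi : ℝ := (Phi A σ v).det.re with hdPhidef
  have hdPhi : 0 < dPhi := Phi_det_re_pos A σ v hσ hv
  set c0 : ℝ := (σ ^ 2)⁻¹ * (∑ k, Complex.normSq (y k))
      - (star (mvec A σ y v) ⬝ᵥ (Bmat A σ v *ᵥ mvec A σ y v)).re with hc0def
  set Cv : ℝ := ((Real.pi * σ ^ 2) ^ M)⁻¹ * (Real.pi ^ N * ∏ j, v j)⁻¹ * Real.exp (-c0)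
    with hCvdef
  have hprodv : 0 < ∏ j, v j := Finset.prod_pos fun j _ => hv j
  have hCv : 0 < Cv := by rw [hCvdef]; positivity
  set r : ℝ := (Real.pi ^ N * dPhi)⁻¹ / Cv with hrdef
  have hr : 0 < r := by rw [hrdef]; positivity
  have hfveq : ∀ x, likelihood A σ y x * gaussDensity 0 (Dmat v) x
      = Cv * Real.exp (-Qf A σ y v x) := by
    intro x
    rw [hCvdef, hc0def]
    exact f_eq A σ y v hσ hv x
  have hfvpos : ∀ x, 0 < likelihood A σ y x * gaussDensity 0 (Dmat v) x := by
    intro x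
    rw [hfveq x]
    positivity
  have hqeq : ∀ x, gaussDensity (mvec A σ y v) (Phi A σ v) x
      = r * (likelihood A σ y x * gaussDensity 0 (Dmat v) x) := by
    intro x
    have h1 : gaussDensity (mvec A σ y v) (Phi A σ v) x
        = (Real.pi ^ N * dPhi)⁻¹ * Real.exp (-Qf A σ y v x) := by
      simp only [gaussDensity]
      rw [Phi_inv A σ v hσ hv, ← hdPhidef]
      rfl
    rw [h1, hfveq x, hrdef]
    field_simp
  have hXfw : ∀ x, likelihood A σ y x * gaussDensity 0 (Dmat (Function.update v i t)) x
      = (likelihood A σ y x * gaussDensity 0 (Dmat v) x)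
          * Real.exp (Real.log (v i / t) + ((v i)⁻¹ - t⁻¹) * Complex.normSq (x i)) := by
    intro x
    rw [prior_update v hv i t ht x]
    ring
  have ifv := int_f A σ y v hσ hv
  have ifw := int_f A σ y (Function.update v i t) hσ hw
  have ifvns := int_f_mul A σ y v hσ hv i
  have ifvX : Integrable (fun x : Fin N → ℂ =>
      (likelihood A σ y x * gaussDensity 0 (Dmat v) x)
        * (Real.log (v i / t) + ((v i)⁻¹ - t⁻¹) * Complex.normSq (x i))) := by
    have heq : (fun x : Fin N → ℂ =>
          (likelihood A σ y x * gaussDensity 0 (Dmat v) x)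
            * (Real.log (v i / t) + ((v i)⁻¹ - t⁻¹) * Complex.normSq (x i)))
        = fun x => (likelihood A σ y x * gaussDensity 0 (Dmat v) x) * Real.log (v i / t)
            + ((v i)⁻¹ - t⁻¹)
                * ((likelihood A σ y x * gaussDensity 0 (Dmat v) x) * Complex.normSq (x i)) := by
      funext x
      ring
    rw [heq]
    exact (ifv.mul_const _).add (ifvns.const_mul _)
  have eGv : (fun x : Fin N → ℂ => gaussDensity (mvec A σ y v) (Phi A σ v) x *
        Real.log (likelihood A σ y x * gaussDensity 0 (Dmat v) x /
          gaussDensity (mvec A σ y v) (Phi A σ v) x))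
      = fun x => (r * Real.log r⁻¹) * (likelihood A σ y x * gaussDensity 0 (Dmat v) x) := by
    funext x
    rw [hqeq x, div_helper1 _ _ (hfvpos x).ne' hr.ne']
    ring
  have eGw : (fun x : Fin N → ℂ => gaussDensity (mvec A σ y v) (Phi A σ v) x *
        Real.log (likelihood A σ y x * gaussDensity 0 (Dmat (Function.update v i t)) x /
          gaussDensity (mvec A σ y v) (Phi A σ v) x))
      = fun x => (r * Real.log r⁻¹) * (likelihood A σ y x * gaussDensity 0 (Dmat v) x)
          + r * ((likelihood A σ y x * gaussDensity 0 (Dmat v) x)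
              * (Real.log (v i / t) + ((v i)⁻¹ - t⁻¹) * Complex.normSq (x i))) := by
    funext x
    rw [hXfw x, hqeq x, div_helper2 _ _ _ (hfvpos x).ne' hr.ne',
      Real.log_mul (inv_ne_zero hr.ne') (Real.exp_ne_zero _), Real.log_exp]
    ring
  rw [ge_iff_le, eGv, eGw] at helbo
  have hint1 : Integrable (fun x : Fin N → ℂ =>
      (r * Real.log r⁻¹) * (likelihood A σ y x * gaussDensity 0 (Dmat v) x)) :=
    ifv.const_mul _
  have hint2 : Integrable (fun x : Fin N → ℂ =>
      r * ((likelihood A σ y x * gaussDensity 0 (Dmat v) x)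
        * (Real.log (v i / t) + ((v i)⁻¹ - t⁻¹) * Complex.normSq (x i)))) :=
    ifvX.const_mul _
  rw [integral_add hint1 hint2, integral_const_mul, integral_const_mul] at helbo
  have hIX : 0 ≤ ∫ x : Fin N → ℂ,
      (likelihood A σ y x * gaussDensity 0 (Dmat v) x)
        * (Real.log (v i / t) + ((v i)⁻¹ - t⁻¹) * Complex.normSq (x i)) := by
    nlinarith [helbo, hr]
  have hpt : ∀ x : Fin N → ℂ,
      (likelihood A σ y x * gaussDensity 0 (Dmat v) x)
          + (likelihood A σ y x * gaussDensity 0 (Dmat v) x)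
              * (Real.log (v i / t) + ((v i)⁻¹ - t⁻¹) * Complex.normSq (x i))
        ≤ likelihood A σ y x * gaussDensity 0 (Dmat (Function.update v i t)) x := by
    intro x
    rw [hXfw x]
    set Xx : ℝ := Real.log (v i / t) + ((v i)⁻¹ - t⁻¹) * Complex.normSq (x i) with hXx
    have h1 : 1 + Xx ≤ Real.exp Xx := by linarith [Real.add_one_le_exp Xx]
    calc (likelihood A σ y x * gaussDensity 0 (Dmat v) x)
          + (likelihood A σ y x * gaussDensity 0 (Dmat v) x) * Xx
        = (likelihood A σ y x * gaussDensity 0 (Dmat v) x) * (1 + Xx) := by ring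
      _ ≤ (likelihood A σ y x * gaussDensity 0 (Dmat v) x) * Real.exp Xx :=
        mul_le_mul_of_nonneg_left h1 (hfvpos x).le
  have hmono := integral_mono (ifv.add ifvX) ifw hpt
  simp only [Pi.add_apply] at hmono
  rw [integral_add ifv ifvX] at hmono
  rw [ge_iff_le]
  linarith
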